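/- For every real $p$ with $1 < p \leq 2$, the function $g(t) = t - (1+t)^{1-p} + (1-t)^p$ is non-negative for all $t \in [0, 1/2]$. -/

import Mathlib

open Set

private lemma nonneg_on_Icc' (f f' : ℝ → ℝ)
    (hd : ∀ x ∈ Icc (0:ℝ) (1/2), HasDerivAt f (f' x) x)
    (h0 : f 0 = 0)
    (hnn : ∀ x ∈ Icc (0:ℝ) (1/2), 0 ≤ f' x)
    {t : ℝ} (ht : t ∈ Icc (0:ℝ) (1/2)) : 0 ≤ f t := by
  have hmono : MonotoneOn f (Icc (0:ℝ) (1/2)) := by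
    apply monotoneOn_of_deriv_nonneg (convex_Icc _ _)
    · exact fun x hx => (hd x hx).continuousAt.continuousWithinAt
    · intro x hx
      rw [interior_Icc] at hx
      exact (hd x (Ioo_subset_Icc_self hx)).differentiableAt.differentiableWithinAt
    · intro x hx
      rw [interior_Icc] at hx
      rw [(hd x (Ioo_subset_Icc_self hx)).deriv]
      exact hnn x (Ioo_subset_Icc_self hx)
  have := hmono (left_mem_Icc.mpr (by norm_num)) ht ht.1
  simpa [h0] using this

private lemma hasDerivAt_one_add' (q t : ℝ) (h : 1 + t ≠ 0) :
    HasDerivAt (fun s : ℝ => (1+s)^q) (q * (1+t)^(q-1)) t := by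
  have h1 : HasDerivAt (fun s : ℝ => 1 + s) 1 t := (hasDerivAt_id t).const_add 1
  have := (Real.hasStrictDerivAt_rpow_const (x := 1+t) (p := q)
    (Or.inl h)).hasDerivAt.comp t h1
  exact this.congr_deriv (mul_one _)

private lemma hasDerivAt_one_sub' (q t : ℝ) (h : 1 - t ≠ 0) :
    HasDerivAt (fun s : ℝ => (1-s)^q) (-(q * (1-t)^(q-1))) t := by
  have h1 : HasDerivAt (fun s : ℝ => 1 - s) (-1) t := (hasDerivAt_id t).const_sub 1
  have := (Real.hasStrictDerivAt_rpow_const (x := 1-t) (p := q)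
    (Or.inl h)).hasDerivAt.comp t h1
  exact this.congr_deriv (by ring)

/-- For `1 < p ≤ 2`, the function `g(t) = t - (1+t)^(1-p) + (1-t)^p` is
non-negative on `[0, 1/2]`. -/
theorem g_nonneg (p : ℝ) (hp1 : 1 < p) (hp2 : p ≤ 2) (t : ℝ)
    (ht : t ∈ Set.Icc (0 : ℝ) (1 / 2)) :
    0 ≤ t - (1 + t) ^ (1 - p) + (1 - t) ^ p := by
  have hbase : ∀ x ∈ Icc (0:ℝ) (1/2), 1 + x ≠ 0 ∧ 1 - x ≠ 0 := by
    intro x hx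
    constructor <;> [nlinarith [hx.1]; nlinarith [hx.2]]
  -- first derivative of g
  set g₁ : ℝ → ℝ := fun s => 1 - (1-p) * (1+s)^(1-p-1) + -(p * (1-s)^(p-1)) with hg₁def
  have hdg : ∀ x ∈ Icc (0:ℝ) (1/2),
      HasDerivAt (fun s => s - (1 + s) ^ (1 - p) + (1 - s) ^ p) (g₁ x) x := by
    intro x hx
    obtain ⟨h1, h2⟩ := hbase x hx
    exact ((hasDerivAt_id x).sub
      (hasDerivAt_one_add' (1-p) x h1)).add (hasDerivAt_one_sub' p x h2)
  -- derivative of g₁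
  set g₂ : ℝ → ℝ := fun s =>
    (0 - (1-p) * ((1-p-1) * (1+s)^(1-p-1-1))) + -(p * (-((p-1) * (1-s)^(p-1-1)))) with hg₂def
  have hdg₁ : ∀ x ∈ Icc (0:ℝ) (1/2), HasDerivAt g₁ (g₂ x) x := by
    intro x hx
    obtain ⟨h1, h2⟩ := hbase x hx
    exact ((hasDerivAt_const x (1:ℝ)).sub
      ((hasDerivAt_one_add' (1-p-1) x h1).const_mul (1-p))).add
      ((hasDerivAt_one_sub' (p-1) x h2).const_mul p).neg
  -- g₂ ≥ 0 on the interval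
  have hg₂nn : ∀ x ∈ Icc (0:ℝ) (1/2), 0 ≤ g₂ x := by
    intro x hx
    have hX : (1+x)^(1-p-1-1) ≤ 1 :=
      Real.rpow_le_one_of_one_le_of_nonpos (by linarith [hx.1]) (by linarith)
    have hY : 1 ≤ (1-x)^(p-1-1) :=
      Real.one_le_rpow_of_pos_of_le_one_of_nonpos (by nlinarith [hx.2]) (by linarith [hx.1])
        (by linarith)
    have key : g₂ x = p * (p-1) * ((1-x)^(p-1-1) - (1+x)^(1-p-1-1)) := by
      rw [hg₂def]; ring
    rw [key]
    have : (0:ℝ) ≤ p * (p-1) := by nlinarith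
    nlinarith
  -- g₁ ≥ 0 on the interval
  have hg₁nn : ∀ x ∈ Icc (0:ℝ) (1/2), 0 ≤ g₁ x := by
    intro x hx
    refine nonneg_on_Icc' g₁ g₂ hdg₁ ?_ hg₂nn hx
    rw [hg₁def]
    norm_num [Real.one_rpow]
  -- conclude
  refine nonneg_on_Icc' _ g₁ hdg ?_ hg₁nn ht
  norm_num [Real.one_rpow]
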